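/- The semiregularization commutes with products: for a family {X_i} of topological spaces, the semiregularization of the product space ∏ X_i equals the product of the semiregularizations ∏ (X_i)_sr. -/

import Mathlib

open Set TopologicalSpace Topology

/-- The semiregularization topology: generated by the regular open sets. -/
def srTop (X : Type*) [TopologicalSpace X] : TopologicalSpace X :=
  TopologicalSpace.generateFrom {U : Set X | interior (closure U) = U}

section aux

variable {Y : Type*} [TopologicalSpace Y]

lemma intCl_inter_closure {A C : Set Y} (hC : IsOpen C) :
    interior (closure A) ∩ closure C ⊆ closure (A ∩ C) := by
  calc interior (closure A) ∩ closure C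
      ⊆ closure (interior (closure A) ∩ C) := isOpen_interior.inter_closure
    _ ⊆ closure (closure (A ∩ C)) := by
        apply closure_mono
        intro x hx
        have : C ∩ closure A ⊆ closure (C ∩ A) := hC.inter_closure
        have hx' : x ∈ closure (C ∩ A) := this ⟨hx.2, interior_subset hx.1⟩
        rwa [inter_comm] at hx'
    _ = closure (A ∩ C) := closure_closure

lemma biInter_intCl_subset_closure {κ : Type*} (s : Finset κ) (A : κ → Set Y)
    (h : ∀ i ∈ s, IsOpen (A i)) :
    (⋂ i ∈ s, interior (closure (A i))) ⊆ closure (⋂ i ∈ s, A i) := by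
  classical
  induction s using Finset.induction with
  | empty => simp
  | @insert a s ha ih =>
    rw [Finset.set_biInter_insert, Finset.set_biInter_insert]
    calc interior (closure (A a)) ∩ ⋂ i ∈ s, interior (closure (A i))
        ⊆ interior (closure (A a)) ∩ closure (⋂ i ∈ s, A i) := by
          exact inter_subset_inter_right _ (ih fun i hi => h i (Finset.mem_insert_of_mem hi))
      _ ⊆ closure (A a ∩ ⋂ i ∈ s, A i) :=
          intCl_inter_closure (isOpen_biInter_finset fun i hi => h i (Finset.mem_insert_of_mem hi))

lemma intCl_idem {u : Set Y} (hu : IsOpen u) :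
    interior (closure (interior (closure u))) = interior (closure u) := by
  have h1 : closure (interior (closure u)) = closure u := by
    apply Subset.antisymm
    · exact closure_minimal (Subset.trans interior_subset Subset.rfl) isClosed_closure
    · apply closure_mono
      calc u = interior u := hu.interior_eq.symm
        _ ⊆ interior (closure u) := interior_mono subset_closure
  rw [h1]

end aux

/-- The semiregularization commutes with products: for a family of topological
spaces, the semiregularization of the product equals the product of the
semiregularizations. -/
theorem stmt_19 {ι : Type*} {X : ι → Type*} [∀ i, TopologicalSpace (X i)] :
    srTop (∀ i, X i) = @Pi.topologicalSpace ι X (fun i => srTop (X i)) := by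
  apply le_antisymm
  · -- srTop (∀ i, X i) ≤ T2 = ⨅ i, induced (eval i) (srTop (X i))
    refine le_iInf fun i => ?_
    unfold srTop
    rw [induced_generateFrom_eq]
    apply le_generateFrom
    rintro s ⟨u, hu, rfl⟩
    apply isOpen_generateFrom_of_mem
    have hc : Continuous (Function.eval i : (∀ j, X j) → X i) := continuous_apply i
    have ho : IsOpenMap (Function.eval i : (∀ j, X j) → X i) := isOpenMap_eval i
    show interior (closure (Function.eval i ⁻¹' u)) = Function.eval i ⁻¹' u
    rw [← ho.preimage_closure_eq_closure_preimage hc,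
      ← ho.preimage_interior_eq_interior_preimage hc]
    exact congrArg _ hu
  · -- T2 ≤ srTop (∀ i, X i)
    apply le_generateFrom
    intro U hU
    replace hU : interior (closure U) = U := hU
    -- U is open in the product topology
    have hUopen : IsOpen U := hU ▸ isOpen_interior
    rw [@isOpen_iff_forall_mem_open _ (@Pi.topologicalSpace ι X (fun i => srTop (X i))) U]
    intro x hx
    obtain ⟨I, u, hui, hsub⟩ := isOpen_pi_iff.mp hUopen x hx
    refine ⟨⋂ i ∈ I, Function.eval i ⁻¹' interior (closure (u i)), ?_, ?_, ?_⟩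
    · -- W ⊆ U
      have h1 : (⋂ i ∈ I, Function.eval i ⁻¹' interior (closure (u i)))
          ⊆ closure (⋂ i ∈ I, Function.eval i ⁻¹' u i) := by
        have heq : ∀ i ∈ I, Function.eval i ⁻¹' interior (closure (u i)) =
            interior (closure (Function.eval i ⁻¹' u i)) := by
          intro i _
          have hc : Continuous (Function.eval i : (∀ j, X j) → X i) := continuous_apply i
          have ho : IsOpenMap (Function.eval i : (∀ j, X j) → X i) := isOpenMap_eval i
          rw [← ho.preimage_closure_eq_closure_preimage hc,
            ← ho.preimage_interior_eq_interior_preimage hc]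
        rw [Set.iInter₂_congr heq]
        exact biInter_intCl_subset_closure I _
          (fun i hi => ((hui i hi).1).preimage (continuous_apply i))
      have h2 : closure (⋂ i ∈ I, Function.eval i ⁻¹' u i) ⊆ closure U := by
        apply closure_mono
        intro y hy
        apply hsub
        rw [Set.mem_pi]
        intro a ha
        exact Set.mem_iInter₂.mp hy a ha
      have hWopen : IsOpen (⋂ i ∈ I, Function.eval i ⁻¹' interior (closure (u i))) :=
        isOpen_biInter_finset fun i _ => isOpen_interior.preimage (continuous_apply i)
      calc (⋂ i ∈ I, Function.eval i ⁻¹' interior (closure (u i)))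
          = interior (⋂ i ∈ I, Function.eval i ⁻¹' interior (closure (u i))) := hWopen.interior_eq.symm
        _ ⊆ interior (closure U) := interior_mono (h1.trans h2)
        _ = U := hU
    · -- W is T2-open
      refine @isOpen_biInter_finset _ _ (@Pi.topologicalSpace ι X (fun i => srTop (X i))) _ _ fun i _ => ?_
      have hgen : IsOpen[srTop (X i)] (interior (closure (u i))) :=
        isOpen_generateFrom_of_mem (intCl_idem (hui i ‹_› |>.1))
      have hle : (@Pi.topologicalSpace ι X (fun i => srTop (X i))) ≤
          TopologicalSpace.induced (Function.eval i) (srTop (X i)) := iInf_le _ i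
      exact IsOpen.mono (@isOpen_induced _ _ (srTop (X i)) (Function.eval i) _ hgen) hle
    · -- x ∈ W
      refine Set.mem_iInter₂.mpr fun i hi => ?_
      have := (hui i hi).2
      have hsub' : u i ⊆ interior (closure (u i)) := by
        calc u i = interior (u i) := (hui i hi).1.interior_eq.symm
          _ ⊆ interior (closure (u i)) := interior_mono subset_closure
      exact hsub' this
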